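/- Let G be a finitely generated group with subgroups Λ and Σ. Let X and X′ be non-trivial Λ-almost invariant subsets of G such that Λ\X and Λ\X′ are almost equal, and let Y and Y′ be non-trivial Σ-almost invariant subsets of G such that Σ\Y and Σ\Y′ are almost equal. Then X crosses Y if and only if X′ crosses Y′. Consequently, the set of double cosets ΣgΛ such that gX crosses Y equals the set of double cosets ΣgΛ such that gX′ crosses Y′. -/

import Mathlib

/-!
Statement 5: if $Λ\X ≐ Λ\X'$ and $Σ\Y ≐ Σ\Y'$ (almost equal), then $X$ crosses $Y$
iff $X'$ crosses $Y'$, and the sets of double cosets $ΣgΛ$ with $gX$ crossing $Y$,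
resp. $gX'$ crossing $Y'$, coincide.
-/

open scoped Pointwise symmDiff

/-- The image of a subset `X ⊆ G` in the set `H\G` of right cosets `Hg`
(the quotient of `G` by the left multiplication action of `H`). -/
def rproj {G : Type*} [Group G] (H : Subgroup G) (X : Set G) :
    Set (Quotient (QuotientGroup.rightRel H)) :=
  Quotient.mk (QuotientGroup.rightRel H) '' X

/-- Two sets are almost equal if their symmetric difference is finite. -/
def AlmostEqSets {α : Type*} (A B : Set α) : Prop :=
  (A ∆ B).Finite

/-- `X ⊆ G` is `H`-almost invariant: `hX = X` for all `h ∈ H`, and for every `g ∈ G`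
the sets `(H\X)g` and `H\X` are almost equal. -/
def IsAlmostInvariant {G : Type*} [Group G] (H : Subgroup G) (X : Set G) : Prop :=
  (∀ h ∈ H, h • X = X) ∧
    ∀ g : G, AlmostEqSets (rproj H ((fun x => x * g) '' X)) (rproj H X)

/-- `X` is a non-trivial `H`-almost invariant subset of `G`:
in addition `H\X` and `H\Xᶜ` are both infinite. -/
def IsNontrivialAlmostInvariant {G : Type*} [Group G] (H : Subgroup G) (X : Set G) : Prop :=
  IsAlmostInvariant H X ∧ (rproj H X).Infinite ∧ (rproj H Xᶜ).Infinite

/-- `X` crosses `Y`, where `Y` is `K`-almost invariant: each of the four sets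
`X ∩ Y`, `Xᶜ ∩ Y`, `X ∩ Yᶜ`, `Xᶜ ∩ Yᶜ` projects to an infinite subset of `K\G`. -/
def Crosses {G : Type*} [Group G] (K : Subgroup G) (X Y : Set G) : Prop :=
  (rproj K (X ∩ Y)).Infinite ∧ (rproj K (Xᶜ ∩ Y)).Infinite ∧
    (rproj K (X ∩ Yᶜ)).Infinite ∧ (rproj K (Xᶜ ∩ Yᶜ)).Infinite

namespace CrossAux

variable {G : Type*} [Group G]

/-- Abbreviation for the quotient map `G → H\G`. -/
abbrev qm (H : Subgroup G) : G → Quotient (QuotientGroup.rightRel H) :=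
  Quotient.mk (QuotientGroup.rightRel H)

lemma mk_eq_mk {H : Subgroup G} {a b : G} : qm H a = qm H b ↔ b * a⁻¹ ∈ H :=
  ⟨fun h => QuotientGroup.rightRel_apply.mp (Quotient.exact h),
   fun h => Quotient.sound (QuotientGroup.rightRel_apply.mpr h)⟩

/-- Left invariance of a subset under a subgroup. -/
def Inv (H : Subgroup G) (X : Set G) : Prop := ∀ h ∈ H, h • X = X

lemma Inv.mul_mem {H : Subgroup G} {X : Set G} (hX : Inv H X) {h x : G}
    (hh : h ∈ H) (hx : x ∈ X) : h * x ∈ X := by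
  rw [← hX h hh]; exact ⟨x, hx, rfl⟩

lemma mem_rproj_iff {H : Subgroup G} {X : Set G} (hX : Inv H X) {x : G} :
    qm H x ∈ rproj H X ↔ x ∈ X := by
  constructor
  · rintro ⟨y, hy, hq⟩
    have hxy : x * y⁻¹ ∈ H := mk_eq_mk.mp hq
    have := hX.mul_mem hxy hy
    simpa using this
  · intro hx; exact ⟨x, hx, rfl⟩

lemma Inv.compl {H : Subgroup G} {X : Set G} (hX : Inv H X) : Inv H Xᶜ := by
  intro h hh; rw [Set.smul_set_compl, hX h hh]

lemma Inv.rmul {H : Subgroup G} {X : Set G} (hX : Inv H X) (g : G) :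
    Inv H ((fun x => x * g) '' X) := by
  intro h hh
  have : h • ((fun x => x * g) '' X) = (fun x => x * g) '' (h • X) := by
    show (fun x => h * x) '' _ = (fun x => x * g) '' ((fun x => h * x) '' X)
    rw [Set.image_image, Set.image_image]
    simp [mul_assoc]
  rw [this, hX h hh]

lemma rproj_diff {H : Subgroup G} {A B : Set G} (hB : Inv H B) :
    rproj H (A \ B) = rproj H A \ rproj H B := by
  ext c
  constructor
  · rintro ⟨y, ⟨hyA, hyB⟩, rfl⟩
    exact ⟨⟨y, hyA, rfl⟩, fun hc => hyB ((mem_rproj_iff hB).mp hc)⟩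
  · rintro ⟨⟨y, hyA, rfl⟩, hc⟩
    exact ⟨y, ⟨hyA, fun hyB => hc ⟨y, hyB, rfl⟩⟩, rfl⟩

lemma rproj_compl {H : Subgroup G} {A : Set G} (hA : Inv H A) :
    rproj H Aᶜ = (rproj H A)ᶜ := by
  ext c
  induction c using Quotient.ind with
  | _ x =>
    show qm H x ∈ _ ↔ qm H x ∈ _
    simp only [mem_rproj_iff hA.compl, Set.mem_compl_iff, mem_rproj_iff hA]

lemma rproj_mono {H : Subgroup G} {A B : Set G} (h : A ⊆ B) : rproj H A ⊆ rproj H B :=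
  Set.image_mono h

lemma rproj_union {H : Subgroup G} (A B : Set G) :
    rproj H (A ∪ B) = rproj H A ∪ rproj H B :=
  Set.image_union _ _ _

/-- The "boundary piece" `X \ Xg⁻¹` has finite image in `H\G` for an
`H`-almost invariant set `X`. -/
lemma boundary_finite {H : Subgroup G} {X : Set G} (hXinv : Inv H X)
    (hXai : ∀ g : G, AlmostEqSets (rproj H ((fun x => x * g) '' X)) (rproj H X)) (u : G) :
    (rproj H (X \ ((fun x => x * u) '' X))).Finite := by
  have h := hXai u
  unfold AlmostEqSets at h
  apply h.subset
  rw [rproj_diff (hXinv.rmul u), Set.symmDiff_def]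
  exact fun c hc => Or.inr ⟨hc.1, hc.2⟩

/-- The key lemma (after Scott): if `X` is `H`-almost invariant, `Y` is `K`-invariant
with `K\Y` infinite, and `X ∩ Y` has finite image in `K\G`, then it has finite image
in `H\G`. -/
lemma key {H K : Subgroup G} {X Y : Set G}
    (hXinv : Inv H X)
    (hXai : ∀ g : G, AlmostEqSets (rproj H ((fun x => x * g) '' X)) (rproj H X))
    (hYinv : Inv K Y) (hYinf : (rproj K Y).Infinite)
    (hfin : (rproj K (X ∩ Y)).Finite) : (rproj H (X ∩ Y)).Finite := by
  obtain ⟨c, hcY, hcXY⟩ := (hYinf.diff hfin).nonempty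
  obtain ⟨z, hzY, rfl⟩ := hcY
  have hcXY' : qm K z ∉ rproj K (X ∩ Y) := hcXY
  set D : Set G := Quotient.out '' rproj K (X ∩ Y) with hDdef
  have hDfin : D.Finite := hfin.image _
  have hcover : X ∩ Y ⊆ ⋃ d ∈ D, X \ ((fun x => x * (d⁻¹ * z)⁻¹) '' X) := by
    intro g hg
    set d := (qm K g).out with hd
    have hdD : d ∈ D := ⟨qm K g, ⟨g, hg, rfl⟩, rfl⟩
    have hqd : qm K d = qm K g := Quotient.out_eq _
    have hk : g * d⁻¹ ∈ K := mk_eq_mk.mp hqd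
    have hgz : g * (d⁻¹ * z) ∉ X := by
      intro hmem
      have h1 : g * d⁻¹ * z ∈ X := by rwa [mul_assoc]
      have h2 : g * d⁻¹ * z ∈ Y := hYinv.mul_mem hk hzY
      have he : qm K (g * d⁻¹ * z) = qm K z := by
        apply mk_eq_mk.mpr
        have : z * (g * d⁻¹ * z)⁻¹ = (g * d⁻¹)⁻¹ := by group
        rw [this]; exact K.inv_mem hk
      apply hcXY'
      rw [← he]
      exact ⟨g * d⁻¹ * z, ⟨h1, h2⟩, rfl⟩
    refine Set.mem_biUnion hdD ⟨hg.1, ?_⟩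
    rintro ⟨y, hy, hyg⟩
    apply hgz
    have hy' : y = g * (d⁻¹ * z) := by
      rw [← hyg]; group
    exact hy' ▸ hy
  have hsub : rproj H (X ∩ Y) ⊆
      ⋃ d ∈ D, rproj H (X \ ((fun x => x * (d⁻¹ * z)⁻¹) '' X)) := by
    refine (rproj_mono hcover).trans ?_
    rw [rproj, Set.image_iUnion₂]
    exact subset_rfl
  exact (hDfin.biUnion fun d _ => boundary_finite hXinv hXai _).subset hsub

/-- Transfer of a single "corner" along `X ↦ X'` with `L\X ∆ L\X'` finite. -/
lemma cornerX {L K : Subgroup G} {X X' Y : Set G}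
    (hXinv : Inv L X)
    (hXai : ∀ g : G, AlmostEqSets (rproj L ((fun x => x * g) '' X)) (rproj L X))
    (hXinf : (rproj L X).Infinite)
    (hX'inv : Inv L X')
    (hX'ai : ∀ g : G, AlmostEqSets (rproj L ((fun x => x * g) '' X')) (rproj L X'))
    (hX'inf : (rproj L X').Infinite)
    (hYinv : Inv K Y)
    (hYai : ∀ g : G, AlmostEqSets (rproj K ((fun x => x * g) '' Y)) (rproj K Y))
    (hYinf : (rproj K Y).Infinite)
    (hd : (rproj L X ∆ rproj L X').Finite) :
    (rproj K (X ∩ Y)).Infinite ↔ (rproj K (X' ∩ Y)).Infinite := by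
  have kXL : (rproj K (X ∩ Y)).Finite ↔ (rproj L (X ∩ Y)).Finite := by
    constructor
    · exact key hXinv hXai hYinv hYinf
    · intro h
      rw [Set.inter_comm] at h ⊢
      exact key hYinv hYai hXinv hXinf h
  have kX'L : (rproj K (X' ∩ Y)).Finite ↔ (rproj L (X' ∩ Y)).Finite := by
    constructor
    · exact key hX'inv hX'ai hYinv hYinf
    · intro h
      rw [Set.inter_comm] at h ⊢
      exact key hYinv hYai hX'inv hX'inf h
  have hdiff1 : (rproj L (X' \ X)).Finite := by
    rw [rproj_diff hXinv]
    exact hd.subset (by rw [Set.symmDiff_def]; exact fun c hc => Or.inr ⟨hc.1, hc.2⟩)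
  have hdiff2 : (rproj L (X \ X')).Finite := by
    rw [rproj_diff hX'inv]
    exact hd.subset (by rw [Set.symmDiff_def]; exact fun c hc => Or.inl ⟨hc.1, hc.2⟩)
  have mid : (rproj L (X ∩ Y)).Finite ↔ (rproj L (X' ∩ Y)).Finite := by
    constructor
    · intro h
      have hsub : X' ∩ Y ⊆ (X ∩ Y) ∪ (X' \ X) := by
        intro x hx
        by_cases hxX : x ∈ X
        · exact Or.inl ⟨hxX, hx.2⟩
        · exact Or.inr ⟨hx.1, hxX⟩
      exact (h.union hdiff1).subset ((rproj_mono hsub).trans (rproj_union _ _).subset)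
    · intro h
      have hsub : X ∩ Y ⊆ (X' ∩ Y) ∪ (X \ X') := by
        intro x hx
        by_cases hxX : x ∈ X'
        · exact Or.inl ⟨hxX, hx.2⟩
        · exact Or.inr ⟨hx.1, hxX⟩
      exact (h.union hdiff2).subset ((rproj_mono hsub).trans (rproj_union _ _).subset)
  have : (rproj K (X ∩ Y)).Finite ↔ (rproj K (X' ∩ Y)).Finite := by
    rw [kXL, kX'L]; exact mid
  rw [← Set.not_infinite, ← Set.not_infinite] at this
  exact not_iff_not.mp this

/-- Transfer of a single "corner" along `Y ↦ Y'` with `K\Y ∆ K\Y'` finite. -/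
lemma cornerY {K : Subgroup G} {X Y Y' : Set G}
    (hYinv : Inv K Y) (hY'inv : Inv K Y')
    (hd : (rproj K Y ∆ rproj K Y').Finite) :
    (rproj K (X ∩ Y)).Infinite ↔ (rproj K (X ∩ Y')).Infinite := by
  have hdiff1 : (rproj K (Y' \ Y)).Finite := by
    rw [rproj_diff hYinv]
    exact hd.subset (by rw [Set.symmDiff_def]; exact fun c hc => Or.inr ⟨hc.1, hc.2⟩)
  have hdiff2 : (rproj K (Y \ Y')).Finite := by
    rw [rproj_diff hY'inv]
    exact hd.subset (by rw [Set.symmDiff_def]; exact fun c hc => Or.inl ⟨hc.1, hc.2⟩)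
  have mid : (rproj K (X ∩ Y)).Finite ↔ (rproj K (X ∩ Y')).Finite := by
    constructor
    · intro h
      have hsub : X ∩ Y' ⊆ (X ∩ Y) ∪ (Y' \ Y) := by
        intro x hx
        by_cases hxY : x ∈ Y
        · exact Or.inl ⟨hx.1, hxY⟩
        · exact Or.inr ⟨hx.2, hxY⟩
      exact (h.union hdiff1).subset ((rproj_mono hsub).trans (rproj_union _ _).subset)
    · intro h
      have hsub : X ∩ Y ⊆ (X ∩ Y') ∪ (Y \ Y') := by
        intro x hx
        by_cases hxY : x ∈ Y'
        · exact Or.inl ⟨hx.1, hxY⟩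
        · exact Or.inr ⟨hx.2, hxY⟩
      exact (h.union hdiff2).subset ((rproj_mono hsub).trans (rproj_union _ _).subset)
  rw [← Set.not_infinite, ← Set.not_infinite] at mid
  exact not_iff_not.mp mid

/-- Almost invariance passes to complements. -/
lemma ai_compl {H : Subgroup G} {X : Set G} (hXinv : Inv H X)
    (hXai : ∀ g : G, AlmostEqSets (rproj H ((fun x => x * g) '' X)) (rproj H X)) :
    ∀ g : G, AlmostEqSets (rproj H ((fun x => x * g) '' Xᶜ)) (rproj H Xᶜ) := by
  intro g
  have himg : (fun x => x * g) '' Xᶜ = ((fun x => x * g) '' X)ᶜ := by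
    rw [Set.image_compl_eq (Group.mulRight_bijective g)]
  have h := hXai g
  unfold AlmostEqSets at h ⊢
  rw [himg, rproj_compl (hXinv.rmul g), rproj_compl hXinv, compl_symmDiff_compl]
  exact h



lemma image_symmDiff_equiv {α β : Type*} (e : α ≃ β) (A B : Set α) :
    e '' (A ∆ B) = (e '' A) ∆ (e '' B) := by
  simp only [Set.symmDiff_def, Set.image_union, Set.image_diff e.injective]

/-- Crossing depends only on the almost-equality classes. -/
lemma crosses_congr (L K : Subgroup G) (X X' Y Y' : Set G)
    (hX : IsNontrivialAlmostInvariant L X) (hX' : IsNontrivialAlmostInvariant L X')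
    (hY : IsNontrivialAlmostInvariant K Y) (hY' : IsNontrivialAlmostInvariant K Y')
    (hXX' : AlmostEqSets (rproj L X) (rproj L X'))
    (hYY' : AlmostEqSets (rproj K Y) (rproj K Y')) :
    Crosses K X Y ↔ Crosses K X' Y' := by
  obtain ⟨⟨hXinv, hXai⟩, hXinf, hXcinf⟩ := hX
  obtain ⟨⟨hX'inv, hX'ai⟩, hX'inf, hX'cinf⟩ := hX'
  obtain ⟨⟨hYinv, hYai⟩, hYinf, hYcinf⟩ := hY
  obtain ⟨⟨hY'inv, hY'ai⟩, hY'inf, hY'cinf⟩ := hY'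
  replace hXinv : Inv L X := hXinv
  replace hX'inv : Inv L X' := hX'inv
  replace hYinv : Inv K Y := hYinv
  replace hY'inv : Inv K Y' := hY'inv
  have hdX : (rproj L X ∆ rproj L X').Finite := hXX'
  have hdY : (rproj K Y ∆ rproj K Y').Finite := hYY'
  have hdXc : (rproj L Xᶜ ∆ rproj L X'ᶜ).Finite := by
    rw [rproj_compl hXinv, rproj_compl hX'inv,
      compl_symmDiff_compl (a := rproj L X) (b := rproj L X')]
    exact hdX
  have hdYc : (rproj K Yᶜ ∆ rproj K Y'ᶜ).Finite := by
    rw [rproj_compl hYinv, rproj_compl hY'inv,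
      compl_symmDiff_compl (a := rproj K Y) (b := rproj K Y')]
    exact hdY
  have c1 := cornerX hXinv hXai hXinf hX'inv hX'ai hX'inf hYinv hYai hYinf hdX
  have c2 := cornerX hXinv.compl (ai_compl hXinv hXai) hXcinf hX'inv.compl
    (ai_compl hX'inv hX'ai) hX'cinf hYinv hYai hYinf hdXc
  have c3 := cornerX hXinv hXai hXinf hX'inv hX'ai hX'inf hYinv.compl
    (ai_compl hYinv hYai) hYcinf hdX
  have c4 := cornerX hXinv.compl (ai_compl hXinv hXai) hXcinf hX'inv.compl
    (ai_compl hX'inv hX'ai) hX'cinf hYinv.compl (ai_compl hYinv hYai) hYcinf hdXc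
  have d1 := cornerY (X := X') hYinv hY'inv hdY
  have d2 := cornerY (X := X'ᶜ) hYinv hY'inv hdY
  have d3 := cornerY (X := X') hYinv.compl hY'inv.compl hdYc
  have d4 := cornerY (X := X'ᶜ) hYinv.compl hY'inv.compl hdYc
  exact and_congr (c1.trans d1) (and_congr (c2.trans d2) (and_congr (c3.trans d3) (c4.trans d4)))

/-- The conjugate subgroup `g L g⁻¹`. -/
def conjSub (g : G) (L : Subgroup G) : Subgroup G :=
  Subgroup.map (MulAut.conj g).toMonoidHom L

/-- The natural bijection `L\G ≃ (gLg⁻¹)\G` sending `Lx` to `(gLg⁻¹)(gx)`. -/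
def eConj (g : G) (L : Subgroup G) :
    Quotient (QuotientGroup.rightRel L) ≃ Quotient (QuotientGroup.rightRel (conjSub g L)) :=
  Quotient.congr (Equiv.mulLeft g) (by
    intro a b
    rw [QuotientGroup.rightRel_apply, QuotientGroup.rightRel_apply]
    have h1 : (Equiv.mulLeft g) b * ((Equiv.mulLeft g) a)⁻¹ = g * (b * a⁻¹) * g⁻¹ := by
      simp [Equiv.coe_mulLeft]; group
    rw [h1, conjSub, Subgroup.mem_map_equiv]
    have h2 : (MulAut.conj g).symm (g * (b * a⁻¹) * g⁻¹) = b * a⁻¹ := by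
      simp [MulAut.conj_symm_apply]; group
    rw [h2])

lemma rproj_conj (g : G) (L : Subgroup G) (Z : Set G) :
    rproj (conjSub g L) (g • Z) = eConj g L '' rproj L Z := by
  show Quotient.mk _ '' ((fun x => g * x) '' Z) = eConj g L '' (Quotient.mk _ '' Z)
  rw [Set.image_image, Set.image_image]
  apply Set.image_congr
  intro z _
  show _ = eConj g L (Quotient.mk _ z)
  rw [eConj, Quotient.congr_mk]
  simp [Equiv.coe_mulLeft]

lemma conj_nontrivial (g : G) {L : Subgroup G} {X : Set G}
    (h : IsNontrivialAlmostInvariant L X) :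
    IsNontrivialAlmostInvariant (conjSub g L) (g • X) := by
  obtain ⟨⟨hinv, hai⟩, hinf, hcinf⟩ := h
  have hInjOn : ∀ s : Set (Quotient (QuotientGroup.rightRel L)),
      Set.InjOn (eConj g L) s := fun s => (eConj g L).injective.injOn
  refine ⟨⟨?_, ?_⟩, ?_, ?_⟩
  · intro h' hh'
    obtain ⟨l, hl, rfl⟩ := hh'
    have h1 : (MulAut.conj g).toMonoidHom l = g * l * g⁻¹ := rfl
    rw [h1, smul_smul]
    have h2 : g * l * g⁻¹ * g = g * l := by group
    rw [h2, ← smul_smul, hinv l hl]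
  · intro a
    have himg : (fun x => x * a) '' (g • X) = g • ((fun x => x * a) '' X) := by
      show (fun x => x * a) '' ((fun x => g * x) '' X)
        = (fun x => g * x) '' ((fun x => x * a) '' X)
      rw [Set.image_image, Set.image_image]
      simp [mul_assoc]
    have h := hai a
    unfold AlmostEqSets at h ⊢
    rw [himg, rproj_conj, rproj_conj, ← image_symmDiff_equiv]
    exact h.image _
  · rw [rproj_conj]
    exact hinf.image (hInjOn _)
  · rw [← Set.smul_set_compl, rproj_conj]
    exact hcinf.image (hInjOn _)

lemma conj_almostEq (g : G) {L : Subgroup G} {X X' : Set G}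
    (h : AlmostEqSets (rproj L X) (rproj L X')) :
    AlmostEqSets (rproj (conjSub g L) (g • X)) (rproj (conjSub g L) (g • X')) := by
  unfold AlmostEqSets at h ⊢
  rw [rproj_conj, rproj_conj, ← image_symmDiff_equiv]
  exact h.image _

end CrossAux

theorem crossing_depends_only_on_almost_equality_class {G : Type*} [Group G] [Group.FG G]
    (L K : Subgroup G) (X X' Y Y' : Set G)
    (hX : IsNontrivialAlmostInvariant L X) (hX' : IsNontrivialAlmostInvariant L X')
    (hY : IsNontrivialAlmostInvariant K Y) (hY' : IsNontrivialAlmostInvariant K Y')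
    (hXX' : AlmostEqSets (rproj L X) (rproj L X'))
    (hYY' : AlmostEqSets (rproj K Y) (rproj K Y')) :
    (Crosses K X Y ↔ Crosses K X' Y') ∧
    DoubleCoset.mk K L '' {g : G | Crosses K (g • X) Y}
      = DoubleCoset.mk K L '' {g : G | Crosses K (g • X') Y'} := by
  refine ⟨CrossAux.crosses_congr L K X X' Y Y' hX hX' hY hY' hXX' hYY', ?_⟩
  have hpt : {g : G | Crosses K (g • X) Y} = {g : G | Crosses K (g • X') Y'} := by
    ext g
    exact CrossAux.crosses_congr (CrossAux.conjSub g L) K (g • X) (g • X') Y Y'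
      (CrossAux.conj_nontrivial g hX) (CrossAux.conj_nontrivial g hX') hY hY'
      (CrossAux.conj_almostEq g hXX') hYY'
  rw [hpt]
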